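/- Let k ≥ 2 and t ≥ 1 be integers with (t/k)·log₂(e) < 1, and let f : 𝔽₂^k → S be any function. Then there exists a natural number r with r < t·log₂(2k) / (1 − (t/k)·log₂(e)) and a parity map p : 𝔽₂^k → 𝔽₂^r such that for all messages u, v with f(u) ≠ f(v), the Hamming distance between the concatenated codewords (u, p(u)) and (v, p(v)) is at least 2t+1. In particular, the optimal redundancy satisfies r_f(k,t) < t·log₂(2k) / (1 − (t/k)·log₂(e)). -/

import Mathlib

open Real

/-- A parity map `p` yields an `(f,t)`-FCC over `𝔽₂`: messages with distinct `f`-values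
have concatenated codewords at Hamming distance at least `2t+1`. -/
def IsFCCBin {S : Type*} {k r : ℕ} (t : ℕ) (f : (Fin k → ZMod 2) → S)
    (p : (Fin k → ZMod 2) → Fin r → ZMod 2) : Prop :=
  ∀ u v : Fin k → ZMod 2, f u ≠ f v →
    2 * t + 1 ≤ hammingDist (Fin.append u (p u)) (Fin.append v (p v))

/-- The optimal redundancy `r_f(k,t)`: the least `r` for which an `(f,t)`-FCC exists. -/
noncomputable def optRedundancyBin {S : Type*} (k t : ℕ) (f : (Fin k → ZMod 2) → S) : ℕ :=
  sInf {r : ℕ | ∃ p : (Fin k → ZMod 2) → Fin r → ZMod 2, IsFCCBin t f p}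

section FCCAux

open Polynomial

lemma zmod2_sq (a : ZMod 2) : a ^ 2 = a := by revert a; decide

lemma aeval_pow_two {F : Type*} [Field F] [Algebra (ZMod 2) F] [CharP F 2]
    (β : F) (w : Polynomial (ZMod 2)) :
    aeval (β ^ 2) w = (aeval β w) ^ 2 := by
  induction w using Polynomial.induction_on' with
  | add p q hp hq =>
      rw [map_add, map_add, hp, hq, add_pow_char]
  | monomial n a =>
      rw [aeval_monomial, aeval_monomial, mul_pow, ← map_pow, zmod2_sq, ← pow_mul, ← pow_mul,
        Nat.mul_comm]

lemma bch_weight {F : Type*} [Field F] [Algebra (ZMod 2) F]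
    {N t : ℕ} (α : F) (hα0 : α ≠ 0)
    (hinj : ∀ i < N, ∀ j < N, α ^ i = α ^ j → i = j)
    (w : Polynomial (ZMod 2)) (hw : w ≠ 0) (hdeg : w.natDegree < N)
    (hroots : ∀ j, 1 ≤ j → j ≤ 2 * t → aeval (α ^ j) w = 0) :
    2 * t + 1 ≤ w.support.card := by
  by_contra hlt
  push_neg at hlt
  have hcard : w.support.card ≤ 2 * t := by omega
  set s := w.support.card with hs
  have hs0 : 0 < s := Finset.card_pos.mpr (Polynomial.support_nonempty.mpr hw)
  let e := w.support.equivFin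
  let idx : Fin s → ℕ := fun b => (e.symm b : ℕ)
  have hmem : ∀ b, idx b ∈ w.support := fun b => (e.symm b).2
  have hidxlt : ∀ b, idx b < N := fun b =>
    lt_of_le_of_lt (le_natDegree_of_mem_supp _ (hmem b)) hdeg
  have hidx_inj : Function.Injective idx := fun a b h =>
    e.symm.injective (Subtype.ext h)
  let y : Fin s → F := fun b => α ^ idx b
  have hy_inj : Function.Injective y := by
    intro a b h
    exact hidx_inj (hinj _ (hidxlt a) _ (hidxlt b) h)
  have hy0 : ∀ b, y b ≠ 0 := fun b => pow_ne_zero _ hα0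
  let M : Matrix (Fin s) (Fin s) F := Matrix.of fun a b => y b ^ ((a : ℕ) + 1)
  have hdet : M.det ≠ 0 := by
    have hMt : M.transpose = Matrix.diagonal y * Matrix.vandermonde y := by
      ext b a
      simp [M, Matrix.vandermonde, Matrix.diagonal_mul, pow_succ']
    rw [← Matrix.det_transpose, hMt, Matrix.det_mul, Matrix.det_diagonal,
      Matrix.det_vandermonde]
    refine mul_ne_zero (Finset.prod_ne_zero_iff.mpr fun b _ => hy0 b) ?_
    refine Finset.prod_ne_zero_iff.mpr fun i _ => Finset.prod_ne_zero_iff.mpr fun j hj => ?_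
    rw [Finset.mem_Ioi] at hj
    exact sub_ne_zero_of_ne fun hyy => hj.ne' (hy_inj hyy)
  let c : Fin s → F := fun b => algebraMap (ZMod 2) F (w.coeff (idx b))
  have hsum : ∀ x : F, aeval x w = ∑ b : Fin s, algebraMap (ZMod 2) F (w.coeff (idx b)) * x ^ idx b := by
    intro x
    rw [aeval_def, eval₂_eq_sum, Polynomial.sum_def]
    rw [← Finset.sum_attach w.support (fun n => algebraMap (ZMod 2) F (w.coeff n) * x ^ n)]
    exact (Fintype.sum_equiv e.symm _ _ fun b => rfl).symm
  have hker : M.mulVec c = 0 := by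
    funext a
    have h1 : aeval (α ^ ((a : ℕ) + 1)) w = 0 :=
      hroots _ (by omega) (by have := a.2; omega)
    rw [hsum] at h1
    have : ∀ b : Fin s, algebraMap (ZMod 2) F (w.coeff (idx b)) * (α ^ ((a : ℕ) + 1)) ^ idx b
        = M a b * c b := by
      intro b
      simp only [M, c, Matrix.of_apply, y, ← pow_mul]
      rw [Nat.mul_comm, mul_comm]
    rw [Finset.sum_congr rfl (fun b _ => this b)] at h1
    simpa [Matrix.mulVec, dotProduct] using h1
  have hinjM : Function.Injective M.mulVec :=
    Matrix.mulVec_injective_iff_isUnit.mpr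
      ((Matrix.isUnit_iff_isUnit_det M).mpr (isUnit_iff_ne_zero.mpr hdet))
  have hc0 : c = 0 := by
    apply hinjM
    rw [hker, Matrix.mulVec_zero]
  have hb : w.coeff (idx ⟨0, hs0⟩) = 0 := by
    have := congrFun hc0 ⟨0, hs0⟩
    simp only [c, Pi.zero_apply] at this
    exact (map_eq_zero_iff _ (algebraMap (ZMod 2) F).injective).mp this
  exact (Polynomial.mem_support_iff.mp (hmem ⟨0, hs0⟩)) hb

noncomputable def msgPoly {k : ℕ} (u : Fin k → ZMod 2) : Polynomial (ZMod 2) :=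
  ∑ i : Fin k, Polynomial.monomial (i : ℕ) (u i)

lemma msgPoly_coeff_lt {k : ℕ} (u : Fin k → ZMod 2) {n : ℕ} (hn : n < k) :
    (msgPoly u).coeff n = u ⟨n, hn⟩ := by
  rw [msgPoly, finset_sum_coeff]
  rw [Finset.sum_eq_single (⟨n, hn⟩ : Fin k)]
  · simp [coeff_monomial]
  · intro b _ hb
    rw [coeff_monomial, if_neg]
    exact fun h => hb (Fin.ext h)
  · simp
lemma msgPoly_coeff_ge {k : ℕ} (u : Fin k → ZMod 2) {n : ℕ} (hn : k ≤ n) :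
    (msgPoly u).coeff n = 0 := by
  rw [msgPoly, finset_sum_coeff]
  refine Finset.sum_eq_zero fun b _ => ?_
  rw [coeff_monomial, if_neg]
  exact fun h => absurd (h ▸ b.2) (by omega)

lemma msgPoly_natDegree_lt {k : ℕ} (hk : 0 < k) (u : Fin k → ZMod 2) :
    (msgPoly u).natDegree < k := by
  by_contra h
  push_neg at h
  rcases eq_or_ne (msgPoly u) 0 with h0 | h0
  · rw [h0, natDegree_zero] at h; omega
  · exact (Polynomial.leadingCoeff_ne_zero.mpr h0) (msgPoly_coeff_ge u h)

lemma exists_fcc (k t m : ℕ) (hk : 2 ≤ k) (ht : 1 ≤ t) (hm : m ≠ 0)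
    (hbig : k + t * m + 1 ≤ 2 ^ m) :
    ∃ p : (Fin k → ZMod 2) → Fin (t * m) → ZMod 2,
      ∀ u v : Fin k → ZMod 2, u ≠ v →
        2 * t + 1 ≤ hammingDist (Fin.append u (p u)) (Fin.append v (p v)) := by
  classical
  set r := t * m with hr
  set N := 2 ^ m - 1 with hNdef
  have h2m : 1 ≤ 2 ^ m := Nat.one_le_two_pow
  have hkrN : k + r ≤ N := by omega
  set F := GaloisField 2 m with hF
  obtain ⟨ζ, hζ⟩ := IsCyclic.exists_generator (α := Fˣ)
  have hcardF : Nat.card F = 2 ^ m := GaloisField.card 2 m hm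
  have hordζ : orderOf ζ = N := by
    rw [orderOf_eq_card_of_forall_mem_zpowers hζ, Nat.card_units, hcardF]
  set α : F := (ζ : F) with hα
  have hα0 : α ≠ 0 := ζ.ne_zero
  have hinj : ∀ i < N, ∀ j < N, α ^ i = α ^ j → i = j := by
    intro i hi j hj hij
    have h2 : ζ ^ i = ζ ^ j := Units.ext (by push_cast; exact hij)
    exact pow_injOn_Iio_orderOf (by rw [hordζ]; exact hi) (by rw [hordζ]; exact hj) h2
  have hint : ∀ x : F, IsIntegral (ZMod 2) x := fun x => IsIntegral.of_finite _ _
  set g : Polynomial (ZMod 2) := ∏ j ∈ Finset.range t, minpoly (ZMod 2) (α ^ (2 * j + 1))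
    with hg
  have hgmonic : g.Monic := monic_prod_of_monic _ _ fun j _ => minpoly.monic (hint _)
  have hgdeg : g.natDegree ≤ r := by
    rw [hg, natDegree_prod _ _ fun j _ => (minpoly.monic (hint _)).ne_zero]
    calc ∑ j ∈ Finset.range t, (minpoly (ZMod 2) (α ^ (2 * j + 1))).natDegree
        ≤ ∑ _j ∈ Finset.range t, m :=
          Finset.sum_le_sum fun j _ =>
            le_trans (minpoly.natDegree_le _) (le_of_eq (GaloisField.finrank 2 hm))
      _ = t * m := by simp [Finset.sum_const, Nat.smul_one_eq_cast]
  have hdegg : g.degree ≤ (r : WithBot ℕ) := natDegree_le_iff_degree_le.mp hgdeg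
  set rem : (Fin k → ZMod 2) → Polynomial (ZMod 2) :=
    fun u => (msgPoly u * X ^ r) %ₘ g with hrem
  set p : (Fin k → ZMod 2) → Fin r → ZMod 2 := fun u i => (rem u).coeff i with hp
  refine ⟨p, fun u v huv => ?_⟩
  set cw : (Fin k → ZMod 2) → Polynomial (ZMod 2) :=
    fun x => msgPoly x * X ^ r - rem x with hcw
  have hgdvd : ∀ x, g ∣ cw x := by
    intro x
    refine ⟨(msgPoly x * X ^ r) /ₘ g, ?_⟩
    have h := modByMonic_add_div (msgPoly x * X ^ r) g
    rw [hcw]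
    dsimp only
    rw [hrem]
    dsimp only
    exact sub_eq_iff_eq_add.mpr (by rw [add_comm]; exact h.symm)
  set w : Polynomial (ZMod 2) := cw u - cw v with hwdef
  have hwdvd : g ∣ w := dvd_sub (hgdvd u) (hgdvd v)
  have hremcoeff : ∀ x, ∀ n, r ≤ n → (rem x).coeff n = 0 := by
    intro x n hn
    refine coeff_eq_zero_of_degree_lt (lt_of_lt_of_le (degree_modByMonic_lt _ hgmonic)
      (le_trans hdegg ?_))
    exact_mod_cast hn
  have hMX : ∀ (x : Fin k → ZMod 2) (n : ℕ),
      (msgPoly x * X ^ r).coeff n = if r ≤ n then (msgPoly x).coeff (n - r) else 0 :=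
    fun x n => coeff_mul_X_pow' _ _ _
  have hlo : ∀ n < r, w.coeff n = (rem v).coeff n - (rem u).coeff n := by
    intro n h
    simp only [hwdef, hcw, coeff_sub, hMX, if_neg (not_le.mpr h)]
    ring
  have hhi : ∀ j (hj : j < k), w.coeff (r + j) = u ⟨j, hj⟩ - v ⟨j, hj⟩ := by
    intro j hj
    simp only [hwdef, hcw, coeff_sub, hMX, if_pos (Nat.le_add_right r j),
      Nat.add_sub_cancel_left, hremcoeff _ _ (Nat.le_add_right r j),
      msgPoly_coeff_lt _ hj]
    ring
  have htop : ∀ n, k + r ≤ n → w.coeff n = 0 := by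
    intro n hn
    have h1 : r ≤ n := by omega
    simp only [hwdef, hcw, coeff_sub, hMX, if_pos h1, hremcoeff _ _ h1,
      msgPoly_coeff_ge _ (show k ≤ n - r by omega)]
    ring
  have hwne : w ≠ 0 := by
    obtain ⟨j, hj⟩ := Function.ne_iff.mp huv
    intro h0
    have h1 := hhi j.1 j.2
    rw [h0, coeff_zero] at h1
    exact hj (by have h2 := sub_eq_zero.mp h1.symm; simpa using h2)
  have hdegw : w.natDegree < N := by
    have hcwdeg : ∀ x, (cw x).natDegree < k + r := by
      intro x
      refine lt_of_le_of_lt (natDegree_sub_le _ _) (max_lt ?_ ?_)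
      · refine lt_of_le_of_lt natDegree_mul_le ?_
        rw [natDegree_X_pow]
        have := msgPoly_natDegree_lt (show 0 < k by omega) x
        omega
      · have : (rem x).natDegree ≤ r := natDegree_le_iff_degree_le.mpr
          (le_of_lt (lt_of_lt_of_le (degree_modByMonic_lt _ hgmonic) hdegg))
        omega
    refine lt_of_lt_of_le (lt_of_le_of_lt (natDegree_sub_le _ _)
      (max_lt (hcwdeg u) (hcwdeg v))) hkrN
  have hroots : ∀ jj, 1 ≤ jj → jj ≤ 2 * t → aeval (α ^ jj) w = 0 := by
    obtain ⟨q, hq⟩ := hwdvd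
    have hgz : ∀ j < t, aeval (α ^ (2 * j + 1)) g = 0 := by
      intro j hjt
      rw [hg, map_prod]
      exact Finset.prod_eq_zero (Finset.mem_range.mpr hjt) (minpoly.aeval _ _)
    intro jj
    induction jj using Nat.strong_induction_on with
    | _ jj ih =>
      intro h1 h2
      rcases Nat.even_or_odd jj with hev | hodd
      · obtain ⟨j', rfl⟩ := hev
        have hα2 : α ^ (j' + j') = (α ^ j') ^ 2 := by rw [← pow_mul, Nat.mul_comm, Nat.two_mul]
        rw [hα2, aeval_pow_two, ih j' (by omega) (by omega) (by omega)]
        ring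
      · obtain ⟨j', rfl⟩ := hodd
        rw [hq, map_mul, hgz j' (by omega), zero_mul]
  have hwt := bch_weight α hα0 hinj w hwne hdegw hroots
  refine le_trans hwt ?_
  unfold hammingDist
  have hsupp_lt : ∀ n ∈ w.support, n < k + r := by
    intro n hn
    by_contra hge
    push_neg at hge
    exact Polynomial.mem_support_iff.mp hn (htop n hge)
  refine Finset.card_le_card_of_injOn
    (fun n => if h : n < r then Fin.natAdd k ⟨n, h⟩
      else Fin.castAdd r ⟨min (n - r) (k - 1), by omega⟩) ?_ ?_
  · intro n hn
    dsimp only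
    have hnk := hsupp_lt n hn
    have hc := Polynomial.mem_support_iff.mp hn
    by_cases h : n < r
    · rw [dif_pos h]
      simp only [Finset.mem_coe, Finset.mem_filter, Finset.mem_univ, true_and, Fin.append_right]
      rw [hlo n h] at hc
      rw [hp]
      exact fun hpe => hc (by rw [sub_eq_zero]; exact hpe.symm)
    · rw [dif_neg h]
      have hjk : n - r < k := by omega
      have hmin : min (n - r) (k - 1) = n - r := min_eq_left (by omega)
      simp only [Finset.mem_coe, Finset.mem_filter, Finset.mem_univ, true_and, Fin.append_left, hmin]
      have h1 := hhi (n - r) hjk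
      rw [show r + (n - r) = n by omega] at h1
      rw [h1] at hc
      exact fun hpe => hc (by rw [sub_eq_zero]; exact_mod_cast hpe)
  · intro a ha b hb hab
    dsimp only at hab
    have hak := hsupp_lt a ha
    have hbk := hsupp_lt b hb
    have := congrArg Fin.val hab
    by_cases h1 : a < r <;> by_cases h2 : b < r <;>
      simp only [dif_pos, dif_neg, h1, h2, dite_true, dite_false] at this <;>
      simp only [Fin.natAdd, Fin.castAdd, Fin.castLE, Fin.val_mk] at this
    · omega
    · rw [min_eq_left (by omega : b - r ≤ k - 1)] at this; omega
    · rw [min_eq_left (by omega : a - r ≤ k - 1)] at this; omega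
    · rw [min_eq_left (by omega : a - r ≤ k - 1),
        min_eq_left (by omega : b - r ≤ k - 1)] at this; omega

end FCCAux

/-- For `k ≥ 2`, `t ≥ 1` with `(t/k)·log₂ e < 1`, there is an `(f,t)`-FCC
over `𝔽₂` with redundancy `r < t·log₂(2k) / (1 − (t/k)·log₂ e)`; in particular the
optimal redundancy is below this bound. -/
theorem fcc_redundancy_upper_bound_binary {S : Type*} (k t : ℕ) (hk : 2 ≤ k) (ht : 1 ≤ t)
    (hreg : (t : ℝ) / k * Real.logb 2 (Real.exp 1) < 1)
    (f : (Fin k → ZMod 2) → S) :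
    (∃ r : ℕ, (r : ℝ) < t * Real.logb 2 (2 * k) / (1 - (t : ℝ) / k * Real.logb 2 (Real.exp 1)) ∧
        ∃ p : (Fin k → ZMod 2) → Fin r → ZMod 2, IsFCCBin t f p) ∧
      (optRedundancyBin k t f : ℝ) <
        t * Real.logb 2 (2 * k) / (1 - (t : ℝ) / k * Real.logb 2 (Real.exp 1)) := by
  classical
  have hlog2 : (0 : ℝ) < Real.log 2 := Real.log_pos (by norm_num)
  have hL : Real.logb 2 (Real.exp 1) = 1 / Real.log 2 := by
    rw [Real.logb, Real.log_exp]
  have hk0 : (0 : ℝ) < (k : ℝ) := by exact_mod_cast (show 0 < k by omega)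
  have ht0 : (0 : ℝ) < (t : ℝ) := by exact_mod_cast (show 0 < t by omega)
  have htk : t < k := by
    by_contra hge
    push_neg at hge
    have h1 : (1 : ℝ) ≤ (t : ℝ) / k := by
      rw [le_div_iff₀ hk0, one_mul]
      exact_mod_cast hge
    have h2 : (1 : ℝ) < Real.logb 2 (Real.exp 1) := by
      rw [hL, lt_div_iff₀ hlog2, one_mul]
      linarith [Real.log_two_lt_d9]
    nlinarith [hreg]
  have hex : ∃ m, k + t * m + 1 ≤ 2 ^ m := by
    refine ⟨4 * k, ?_⟩
    have h1 : k + 1 ≤ 2 ^ k := Nat.lt_two_pow_self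
    have h2 : (k + 1) ^ 4 ≤ (2 ^ k) ^ 4 := Nat.pow_le_pow_left h1 4
    have h3 : t * (4 * k) ≤ k * (4 * k) := Nat.mul_le_mul_right _ (le_of_lt htk)
    have e1 : (k + 1) ^ 4 = k^4 + 4*k^3 + 6*k^2 + 4*k + 1 := by ring
    have e2 : k * (4 * k) = 4 * k^2 := by ring
    have h4 : k + k * (4 * k) + 1 ≤ (k + 1) ^ 4 := by
      rw [e1, e2]
      nlinarith [pow_pos (show 0 < k by omega) 4, pow_pos (show 0 < k by omega) 3]
    calc k + t * (4 * k) + 1 ≤ k + k * (4 * k) + 1 := by omega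
      _ ≤ (k + 1) ^ 4 := h4
      _ ≤ (2 ^ k) ^ 4 := h2
      _ = 2 ^ (4 * k) := by rw [← pow_mul, Nat.mul_comm]
  set m := Nat.find hex with hmdef
  have hfind : k + t * m + 1 ≤ 2 ^ m := Nat.find_spec hex
  have hm1 : 1 ≤ m := by
    rcases Nat.eq_zero_or_pos m with h | h
    · exfalso; rw [h, pow_zero, Nat.mul_zero] at hfind; omega
    · exact h
  have hmin : 2 ^ (m - 1) ≤ k + t * (m - 1) := by
    have := Nat.find_min hex (show m - 1 < m by omega)
    omega
  obtain ⟨p, hp⟩ := exists_fcc k t m hk ht (by omega) hfind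
  have hFCC : IsFCCBin t f p := fun u v huv => hp u v fun he => huv (by rw [he])
  set L := Real.log 2 with hLdef
  have hstrictN : 2 ^ (m - 1) < k + t * m := by
    have h2 : t * (m - 1) + t = t * m := by
      rw [← Nat.mul_succ, Nat.succ_eq_add_one, Nat.sub_add_cancel hm1]
    omega
  have hstrict : (2 : ℝ) ^ (m - 1) < (k : ℝ) + t * m := by exact_mod_cast hstrictN
  have hstep : (m : ℝ) - 1 < Real.logb 2 ((k : ℝ) + t * m) := by
    have hpow : Real.logb 2 ((2 : ℝ) ^ (m - 1)) = ((m - 1 : ℕ) : ℝ) := by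
      rw [Real.logb_pow, Real.logb_self_eq_one (by norm_num), mul_one]
    have hlt := Real.logb_lt_logb (b := 2) (by norm_num) (by positivity) hstrict
    rw [hpow] at hlt
    rwa [Nat.cast_sub hm1, Nat.cast_one] at hlt
  have hsplit : Real.logb 2 ((k : ℝ) + t * m) ≤
      Real.logb 2 k + ((t : ℝ) * m / k) * (1 / L) := by
    have heq : (k : ℝ) + t * m = k * (1 + (t : ℝ) * m / k) := by field_simp
    rw [heq, Real.logb_mul (ne_of_gt hk0) (by positivity)]
    have hlog1 : Real.logb 2 (1 + (t : ℝ) * m / k) ≤ ((t : ℝ) * m / k) * (1 / L) := by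
      have hx : (0 : ℝ) < 1 + (t : ℝ) * m / k := by positivity
      have h2 : Real.log (1 + (t : ℝ) * m / k) ≤ (t : ℝ) * m / k := by
        linarith [Real.log_le_sub_one_of_pos hx]
      calc Real.logb 2 (1 + (t : ℝ) * m / k) = Real.log (1 + (t : ℝ) * m / k) / L := rfl
        _ ≤ ((t : ℝ) * m / k) / L := (div_le_div_iff_of_pos_right hlog2).mpr h2
        _ = ((t : ℝ) * m / k) * (1 / L) := by ring
    linarith
  have hlogb2k : Real.logb 2 (2 * (k : ℝ)) = 1 + Real.logb 2 k := by
    rw [Real.logb_mul (by norm_num) (ne_of_gt hk0), Real.logb_self_eq_one (by norm_num)]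
  have hring : (t : ℝ) * m / k * (1 / L) = (m : ℝ) * ((t : ℝ) / k * (1 / L)) := by ring
  have hkey : (m : ℝ) * (1 - (t : ℝ) / k * (1 / L)) < Real.logb 2 (2 * (k : ℝ)) := by
    rw [hlogb2k]
    nlinarith [hstep, hsplit, hring]
  have hD : (0 : ℝ) < 1 - (t : ℝ) / k * Real.logb 2 (Real.exp 1) := by linarith
  have hbound : ((t * m : ℕ) : ℝ) <
      t * Real.logb 2 (2 * (k : ℝ)) / (1 - (t : ℝ) / k * Real.logb 2 (Real.exp 1)) := by
    rw [lt_div_iff₀ hD, hL]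
    push_cast
    calc (t : ℝ) * m * (1 - (t : ℝ) / k * (1 / L))
        = t * ((m : ℝ) * (1 - (t : ℝ) / k * (1 / L))) := by ring
      _ < t * Real.logb 2 (2 * (k : ℝ)) := by
          exact mul_lt_mul_of_pos_left hkey ht0
  refine ⟨⟨t * m, hbound, p, hFCC⟩, ?_⟩
  have hle : optRedundancyBin k t f ≤ t * m := Nat.sInf_le ⟨p, hFCC⟩
  exact lt_of_le_of_lt (by exact_mod_cast hle) hbound
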